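/- arXiv:1902.04273 — 8 statements merged into one kernel-verified Lean document; each statement's English description precedes it below -/
import Mathlib

section
/- Let 𝔑 be a nest in a vector space 𝔛, x ∈ 𝔛, and φ a linear functional on 𝔛. The rank-one operator x ⊗ φ (defined by (x ⊗ φ)(y) = φ(y)x) leaves every subspace in 𝔑 invariant if and only if 𝔑(x)₋ ⊆ ker φ. -/
variable {F X : Type*} [Field F] [AddCommGroup X] [Module F X]

/-- A nest: a totally ordered family of subspaces containing `⊥` and `⊤`,
closed under arbitrary intersections and spans (joins) of subfamilies. -/
def IsNest (N : Set (Submodule F X)) : Prop :=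
  IsChain (· ≤ ·) N ∧ ⊥ ∈ N ∧ ⊤ ∈ N ∧ ∀ S ⊆ N, sInf S ∈ N ∧ sSup S ∈ N

/-- `𝔑(x)`: the intersection of all members of `𝔑` containing `x`. -/
def nestAt (N : Set (Submodule F X)) (x : X) : Submodule F X :=
  sInf {M | M ∈ N ∧ x ∈ M}

/-- `𝔑(x)₋`: the union (as a set of vectors) of all members of `𝔑` not containing `x`. -/
def nestBelow (N : Set (Submodule F X)) (x : X) : Set X :=
  ⋃ M ∈ {M | M ∈ N ∧ x ∉ M}, (M : Set X)

/-- `Alg 𝔑`: the set of endomorphisms leaving every member of `𝔑` invariant. -/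
def nestAlg (N : Set (Submodule F X)) : Set (Module.End F X) :=
  {T | ∀ M ∈ N, ∀ x ∈ M, T x ∈ M}

/-- `x ⊗ φ ∈ Alg 𝔑 ↔ 𝔑(x)₋ ⊆ ker φ`. -/
theorem rankOne_mem_nestAlg_iff {N : Set (Submodule F X)} (hN : IsNest N)
    (x : X) (φ : Module.Dual F X) :
    φ.smulRight x ∈ nestAlg N ↔ nestBelow N x ⊆ ↑(LinearMap.ker φ) := by
  constructor
  · intro hT y hy
    simp only [nestBelow, Set.mem_iUnion] at hy
    obtain ⟨M, ⟨hMN, hxM⟩, hyM⟩ := hy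
    have hTy := hT M hMN y hyM
    simp only [LinearMap.smulRight_apply] at hTy
    by_contra hφ
    simp only [SetLike.mem_coe, LinearMap.mem_ker] at hφ
    exact hxM (by simpa [smul_smul, inv_mul_cancel₀ hφ] using M.smul_mem (φ y)⁻¹ hTy)
  · intro h M hMN y hyM
    simp only [LinearMap.smulRight_apply]
    by_cases hx : x ∈ M
    · exact M.smul_mem _ hx
    · have : y ∈ nestBelow N x := Set.mem_iUnion₂.2 ⟨M, ⟨hMN, hx⟩, hyM⟩
      have := h this
      simp only [SetLike.mem_coe, LinearMap.mem_ker] at this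
      simp [this]
end

section
/- Let 𝔑 be a nest in a vector space 𝔛 and let x, y be nonzero vectors with y ∈ 𝔑(x). Then there exists a rank-one operator R in Alg 𝔑 with Rx = y. -/
variable {F X : Type*} [Field F] [AddCommGroup X] [Module F X]

/-- if `y ∈ 𝔑(x)`, `x, y ≠ 0`, some rank-one `R ∈ Alg 𝔑` has `Rx = y`. -/
theorem exists_rankOne_mapsTo {N : Set (Submodule F X)} (hN : IsNest N)
    {x y : X} (hx : x ≠ 0) (hy : y ≠ 0) (hyx : y ∈ nestAt N x) :
    ∃ R : Module.End F X, R ∈ nestAlg N ∧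
      (∃ (z : X) (φ : Module.Dual F X), R = φ.smulRight z) ∧ R ≠ 0 ∧ R x = y := by
  obtain ⟨hchain, hbot, htop, -⟩ := hN
  set S : Set (Submodule F X) := {M | M ∈ N ∧ x ∉ M} with hS
  set W : Submodule F X := sSup S with hW
  have hSne : S.Nonempty := ⟨⊥, hbot, by simpa using hx⟩
  have hdir : DirectedOn (· ≤ ·) S := by
    intro a ha b hb
    rcases eq_or_ne a b with rfl | hab
    · exact ⟨a, ha, le_rfl, le_rfl⟩
    · rcases hchain ha.1 hb.1 hab with h | h
      · exact ⟨b, hb, h, le_rfl⟩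
      · exact ⟨a, ha, le_rfl, h⟩
  have hxW : x ∉ W := by
    intro hxw
    rw [hW, Submodule.mem_sSup_of_directed hSne hdir] at hxw
    obtain ⟨M, hM, hxM⟩ := hxw
    exact hM.2 hxM
  obtain ⟨f, hfx, hfW⟩ := W.exists_dual_map_eq_bot_of_notMem hxW inferInstance
  set φ : Module.Dual F X := (f x)⁻¹ • f with hφ
  have hφx : φ x = 1 := by simp [hφ, inv_mul_cancel₀ hfx]
  have hφW : ∀ v ∈ W, φ v = 0 := by
    intro v hv
    have : f v ∈ W.map f := Submodule.mem_map_of_mem hv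
    rw [hfW] at this
    simp [hφ, (Submodule.mem_bot _).mp this]
  refine ⟨φ.smulRight y, ?_, ⟨y, φ, rfl⟩, ?_, by simp [hφx]⟩
  · intro M hM v hv
    by_cases hxM : x ∈ M
    · have hyM : y ∈ M := by
        have : nestAt N x ≤ M := sInf_le ⟨hM, hxM⟩
        exact this hyx
      simpa using M.smul_mem (φ v) hyM
    · have hMW : M ≤ W := le_sSup ⟨hM, hxM⟩
      have : φ v = 0 := hφW v (hMW hv)
      simp [this]
  · intro h
    apply hy
    have := congrArg (fun T : Module.End F X => T x) h
    simpa [hφx] using this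
end

section
/- Every nest 𝔑 in a vector space 𝔛 is reflexive: 𝔑 = Lat(Alg 𝔑), i.e., every subspace of 𝔛 that is invariant under all operators in Alg 𝔑 belongs to 𝔑. In fact 𝔑 = Lat(ℛ₁ ∩ Alg 𝔑), where ℛ₁ is the set of rank-one operators. -/
variable {F X : Type*} [Field F] [AddCommGroup X] [Module F X]

/-- Key step: any subspace invariant under all rank-one operators in `Alg 𝔑` lies in `𝔑`. -/
theorem mem_of_rank_one_invariant {N : Set (Submodule F X)} (hN : IsNest N)
    (M : Submodule F X)
    (hM : ∀ T ∈ nestAlg N,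
      (∃ (z : X) (φ : Module.Dual F X), T = φ.smulRight z ∧ T ≠ 0) →
        ∀ x ∈ M, T x ∈ M) : M ∈ N := by
  obtain ⟨hchain, hbot, htop, hcl⟩ := hN
  set S : Set (Submodule F X) := {K | K ∈ N ∧ K ≤ M} with hS
  have hSN : S ⊆ N := fun K hK => hK.1
  set M₀ : Submodule F X := sSup S with hM₀
  have hM₀N : M₀ ∈ N := (hcl S hSN).2
  have hM₀le : M₀ ≤ M := sSup_le fun K hK => hK.2
  -- it suffices to show M = M₀
  suffices h : M = M₀ by rw [h]; exact hM₀N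
  by_contra hne
  obtain ⟨x, hxM, hxM₀⟩ : ∃ x, x ∈ M ∧ x ∉ M₀ := by
    by_contra h; push_neg at h
    exact hne (le_antisymm h hM₀le)
  have hx0 : x ≠ 0 := fun h => hxM₀ (h ▸ M₀.zero_mem)
  -- x ∈ nestAt N x
  have hx_at : x ∈ nestAt N x := Submodule.mem_sInf.2 fun p hp => hp.2
  have h_at_N : nestAt N x ∈ N := (hcl _ (fun K hK => hK.1)).1
  -- nestAt N x is not ≤ M
  have h_at_not_le : ¬ nestAt N x ≤ M := by
    intro hle
    have hle2 : nestAt N x ≤ M₀ := le_sSup ⟨h_at_N, hle⟩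
    exact hxM₀ (hle2 hx_at)
  obtain ⟨y, hy_at, hyM⟩ := SetLike.not_le_iff_exists.1 h_at_not_le
  -- B = sup of members not containing x
  set Sb : Set (Submodule F X) := {K | K ∈ N ∧ x ∉ K} with hSb
  set B : Submodule F X := sSup Sb with hB
  have hSbN : Sb ⊆ N := fun K hK => hK.1
  have hxB : x ∉ B := by
    intro hxB
    have hdir : DirectedOn (· ≤ ·) Sb := (hchain.mono hSbN).directedOn
    have hne' : Sb.Nonempty := ⟨⊥, hbot, by simpa using hx0⟩
    obtain ⟨K, hK, hxK⟩ := (Submodule.mem_sSup_of_directed hne' hdir).1 hxB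
    exact hK.2 hxK
  -- find φ with φ x ≠ 0 vanishing on B
  obtain ⟨f, hfx, hfB⟩ := B.exists_dual_map_eq_bot_of_notMem hxB inferInstance
  set φ : Module.Dual F X := (f x)⁻¹ • f with hφ
  have hφx : φ x = 1 := by simp [hφ, inv_mul_cancel₀ hfx]
  have hφB : ∀ v ∈ B, φ v = 0 := by
    intro v hv
    have : f v ∈ B.map f := Submodule.mem_map_of_mem hv
    rw [hfB] at this
    have h0 : f v = 0 := (Submodule.mem_bot F).1 this
    simp [hφ, h0]
  -- the rank-one operator
  set T : Module.End F X := φ.smulRight y with hT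
  have hTx : T x = y := by simp [hT, hφx]
  have hT_alg : T ∈ nestAlg N := by
    intro K hK v hv
    by_cases hxK : x ∈ K
    · have h_at_le : nestAt N x ≤ K := sInf_le ⟨hK, hxK⟩
      have hyK : y ∈ K := h_at_le hy_at
      simpa [hT] using K.smul_mem (φ v) hyK
    · have hKB : K ≤ B := le_sSup ⟨hK, hxK⟩
      have : φ v = 0 := hφB v (hKB hv)
      simp [hT, this]
  have hTne : T ≠ 0 := by
    intro h
    apply hyM
    rw [← hTx, h]
    exact M.zero_mem
  have := hM T hT_alg ⟨y, φ, rfl, hTne⟩ x hxM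
  rw [hTx] at this
  exact hyM this

/-- every nest is reflexive, indeed `𝔑 = Lat(ℛ₁ ∩ Alg 𝔑)`. -/
theorem nest_reflexive {N : Set (Submodule F X)} (hN : IsNest N) :
    N = {M : Submodule F X | ∀ T ∈ nestAlg N, ∀ x ∈ M, T x ∈ M} ∧
    N = {M : Submodule F X | ∀ T ∈ nestAlg N,
      (∃ (z : X) (φ : Module.Dual F X), T = φ.smulRight z ∧ T ≠ 0) →
        ∀ x ∈ M, T x ∈ M} := by
  constructor
  · ext M
    constructor
    · intro hM T hT x hx
      exact hT M hM x hx
    · intro hM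
      exact mem_of_rank_one_invariant hN M fun T hT _ x hx => hM T hT x hx
  · ext M
    constructor
    · intro hM T hT _ x hx
      exact hT M hM x hx
    · intro hM
      exact mem_of_rank_one_invariant hN M hM
end

section
/- Let 𝔑 be a nest in a vector space 𝔛 and let M be a finite-dimensional subspace of 𝔛 with dim M = n. Then there exists an idempotent P ∈ Alg 𝔑 with range M, and P can be written as a sum of n rank-one idempotents each lying in Alg 𝔑. -/
variable {F X : Type*} [Field F] [AddCommGroup X] [Module F X]

section Aux
open Module LinearMap Submodule

lemma nestAlg_mul {N : Set (Submodule F X)} {S T : Module.End F X}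
    (hS : S ∈ nestAlg N) (hT : T ∈ nestAlg N) : S * T ∈ nestAlg N :=
  fun M hM x hx => hS M hM _ (hT M hM x hx)

lemma nestAlg_sub {N : Set (Submodule F X)} {S T : Module.End F X}
    (hS : S ∈ nestAlg N) (hT : T ∈ nestAlg N) : S - T ∈ nestAlg N :=
  fun M hM x hx => M.sub_mem (hS M hM x hx) (hT M hM x hx)

lemma nestAlg_add {N : Set (Submodule F X)} {S T : Module.End F X}
    (hS : S ∈ nestAlg N) (hT : T ∈ nestAlg N) : S + T ∈ nestAlg N :=
  fun M hM x hx => M.add_mem (hS M hM x hx) (hT M hM x hx)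

lemma nestAlg_one {N : Set (Submodule F X)} : (1 : Module.End F X) ∈ nestAlg N :=
  fun _ _ x hx => hx

lemma exists_functional {N : Set (Submodule F X)} (hN : IsNest N) {x : X} (hx : x ≠ 0) :
    ∃ f : X →ₗ[F] F, f x = 1 ∧ ∀ A ∈ N, x ∉ A → ∀ y ∈ A, f y = 0 := by
  set S : Set (Submodule F X) := {A | A ∈ N ∧ x ∉ A} with hS
  have hbot : (⊥ : Submodule F X) ∈ S := ⟨hN.2.1, by simpa using hx⟩
  have hdir : DirectedOn (· ≤ ·) S := by
    intro a ha b hb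
    rcases eq_or_ne a b with rfl | hne
    · exact ⟨a, ha, le_rfl, le_rfl⟩
    · rcases hN.1 ha.1 hb.1 hne with h | h
      · exact ⟨b, hb, h, le_rfl⟩
      · exact ⟨a, ha, le_rfl, h⟩
  have hxW : x ∉ sSup S := by
    rw [Submodule.mem_sSup_of_directed ⟨⊥, hbot⟩ hdir]
    rintro ⟨A, hA, hxA⟩
    exact hA.2 hxA
  set W := sSup S with hW
  have hq : (Submodule.Quotient.mk x : X ⧸ W) ≠ 0 := by
    simpa [Submodule.Quotient.mk_eq_zero] using hxW
  obtain ⟨φ, hφ⟩ : ∃ φ : Module.Dual F (X ⧸ W), φ (Submodule.Quotient.mk x) ≠ 0 := by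
    by_contra h
    push_neg at h
    exact hq ((Module.forall_dual_apply_eq_zero_iff F _).mp h)
  refine ⟨(φ (Submodule.Quotient.mk x))⁻¹ • (φ.comp W.mkQ), ?_, ?_⟩
  · simp [inv_mul_cancel₀ hφ]
  · intro A hA hxA y hy
    have hyW : y ∈ W := le_sSup (show A ∈ S from ⟨hA, hxA⟩) hy
    simp [(Submodule.Quotient.mk_eq_zero W).mpr hyW]

lemma aux {N : Set (Submodule F X)} (hN : IsNest N) :
    ∀ n : ℕ, ∀ M : Submodule F X, ∀ _ : FiniteDimensional F M, Module.finrank F M = n →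
    ∃ P : Module.End F X, P ∈ nestAlg N ∧ P * P = P ∧ LinearMap.range P = M ∧
      ∃ Ps : Fin n → Module.End F X,
        (∀ i, Ps i ∈ nestAlg N ∧ Ps i * Ps i = Ps i ∧
          LinearMap.range (Ps i) ≤ M ∧ Module.rank F (LinearMap.range (Ps i)) = 1) ∧
        P = ∑ i, Ps i := by
  intro n
  induction n with
  | zero =>
    intro M hfd hn
    have hM : M = ⊥ := Submodule.finrank_eq_zero.mp hn
    refine ⟨0, fun A _ x _ => by simpa using A.zero_mem, by simp, by simp [hM], ?_⟩
    exact ⟨Fin.elim0, fun i => i.elim0, by simp⟩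
  | succ n ih =>
    intro M hfd hn
    -- pick a nonzero vector in M
    have hMne : M ≠ ⊥ := by
      intro h
      rw [h] at hn
      simp [finrank_bot] at hn
    obtain ⟨x, hxM, hx0⟩ := Submodule.exists_mem_ne_zero_of_ne_bot hMne
    obtain ⟨f, hfx, hf⟩ := exists_functional hN hx0
    set Q : Module.End F X := f.smulRight x with hQdef
    have hQapp : ∀ y, Q y = f y • x := fun y => rfl
    have hQalg : Q ∈ nestAlg N := by
      intro A hA y hy
      by_cases hxA : x ∈ A
      · exact A.smul_mem _ hxA
      · rw [hQapp, hf A hA hxA y hy, zero_smul]; exact A.zero_mem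
    have hQidem : Q * Q = Q := by
      ext y
      simp only [Module.End.mul_apply, hQapp, map_smul, smul_eq_mul, hfx, mul_one]
    have hQrange : LinearMap.range Q = Submodule.span F {x} := by
      apply le_antisymm
      · rintro _ ⟨y, rfl⟩
        exact Submodule.smul_mem _ _ (Submodule.mem_span_singleton_self x)
      · rw [Submodule.span_singleton_le_iff_mem]
        exact ⟨x, by simp [hQapp, hfx]⟩
    -- the kernel piece
    set M' : Submodule F X := M ⊓ LinearMap.ker f with hM'def
    have hM'fd : FiniteDimensional F M' := Submodule.finiteDimensional_of_le inf_le_left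
    have hM'rank : Module.finrank F M' = n := by
      set f' : M →ₗ[F] F := f.domRestrict M with hf'
      have hsurj : LinearMap.range f' = ⊤ := by
        rw [LinearMap.range_eq_top]
        intro c
        exact ⟨⟨c • x, M.smul_mem c hxM⟩, by simp [hf', hfx]⟩
      have h1 : Module.finrank F (LinearMap.range f') = 1 := by
        rw [hsurj, finrank_top, Module.finrank_self]
      have h2 := LinearMap.finrank_range_add_finrank_ker f'
      rw [h1, hn] at h2
      have hker : Module.finrank F (LinearMap.ker f') = n := by omega
      have hmap : Submodule.map M.subtype (LinearMap.ker f') = M' := by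
        rw [hf', LinearMap.ker_domRestrict, Submodule.map_comap_subtype]
      have := (Submodule.equivMapOfInjective M.subtype M.injective_subtype
        (LinearMap.ker f')).finrank_eq
      rw [hmap] at this
      rw [← this, hker]
    obtain ⟨P', hP'alg, hP'idem, hP'range, Ps', hPs', hP'sum⟩ := ih M' hM'fd hM'rank
    have hP'fix : ∀ y ∈ M', P' y = y := by
      intro y hy
      rw [← hP'range] at hy
      obtain ⟨z, rfl⟩ := hy
      have := congrArg (fun T : Module.End F X => T z) hP'idem
      simpa using this
    set P : Module.End F X := Q + P' * (1 - Q) with hPdef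
    have hPapp : ∀ y, P y = f y • x + P' (y - f y • x) := by
      intro y; simp [hPdef, hQapp]
    have hPrangeLe : ∀ y, P y ∈ M := by
      intro y
      refine M.add_mem (M.smul_mem _ hxM) ?_
      have : P' (y - f y • x) ∈ LinearMap.range P' := LinearMap.mem_range_self _ _
      rw [hP'range] at this
      exact this.1
    have hPfix : ∀ y ∈ M, P y = y := by
      intro y hy
      have hmem : y - f y • x ∈ M' := by
        refine ⟨M.sub_mem hy (M.smul_mem _ hxM), ?_⟩
        simp [LinearMap.mem_ker, hfx, mul_comm]
      rw [hPapp, hP'fix _ hmem]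
      abel
    have hPalg : P ∈ nestAlg N :=
      nestAlg_add hQalg (nestAlg_mul hP'alg (nestAlg_sub nestAlg_one hQalg))
    have hPrange : LinearMap.range P = M := by
      apply le_antisymm
      · rintro _ ⟨y, rfl⟩; exact hPrangeLe y
      · intro y hy; exact ⟨y, hPfix y hy⟩
    have hPidem : P * P = P := by
      ext y
      exact hPfix (P y) (hPrangeLe y)
    -- rank-one pieces
    have hQkill : ∀ i, Q * Ps' i = 0 := by
      intro i
      ext z
      have hz : Ps' i z ∈ M' := (hPs' i).2.2.1 (LinearMap.mem_range_self _ _)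
      have : f (Ps' i z) = 0 := hz.2
      simp [Module.End.mul_apply, hQapp, this]
    have hRange : ∀ i, LinearMap.range (Ps' i * (1 - Q)) = LinearMap.range (Ps' i) := by
      intro i
      apply le_antisymm
      · rintro _ ⟨z, rfl⟩; exact LinearMap.mem_range_self _ _
      · rintro _ ⟨z, rfl⟩
        refine ⟨Ps' i z, ?_⟩
        have h1 : Q (Ps' i z) = 0 := by
          have := congrArg (fun T : Module.End F X => T z) (hQkill i)
          simpa using this
        have h2 : Ps' i (Ps' i z) = Ps' i z := by
          have := congrArg (fun T : Module.End F X => T z) (hPs' i).2.1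
          simpa using this
        simp [Module.End.mul_apply, h1, h2]
    refine ⟨P, hPalg, hPidem, hPrange,
      Fin.cons Q (fun i => Ps' i * (1 - Q)), ?_, ?_⟩
    · intro i
      refine Fin.cases ?_ ?_ i
      · refine ⟨hQalg, hQidem, ?_, ?_⟩
        · rw [Fin.cons_zero, hQrange, Submodule.span_singleton_le_iff_mem]; exact hxM
        · rw [Fin.cons_zero, hQrange]
          exact Module.rank_eq_one_iff_finrank_eq_one.mpr (finrank_span_singleton hx0)
      · intro i
        rw [Fin.cons_succ]
        refine ⟨nestAlg_mul (hPs' i).1 (nestAlg_sub nestAlg_one hQalg), ?_, ?_, ?_⟩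
        · have : (1 - Q) * Ps' i = Ps' i := by
            rw [sub_mul, one_mul, hQkill i, sub_zero]
          calc Ps' i * (1 - Q) * (Ps' i * (1 - Q))
              = Ps' i * ((1 - Q) * Ps' i) * (1 - Q) := by simp only [mul_assoc]
            _ = Ps' i * Ps' i * (1 - Q) := by rw [this]
            _ = Ps' i * (1 - Q) := by rw [(hPs' i).2.1]
        · rw [hRange i]
          exact le_trans (hPs' i).2.2.1 inf_le_left
        · rw [hRange i]
          exact (hPs' i).2.2.2
    · rw [Fin.sum_cons, ← Finset.sum_mul, ← hP'sum, hPdef]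

end Aux

/-- a finite-dimensional subspace is the range of an idempotent in
`Alg 𝔑`, which is a sum of `n = dim M` rank-one idempotents in `Alg 𝔑`. -/
theorem exists_idempotent_range_eq {N : Set (Submodule F X)} (hN : IsNest N)
    (M : Submodule F X) [FiniteDimensional F M] {n : ℕ} (hn : Module.finrank F M = n) :
    ∃ P : Module.End F X, P ∈ nestAlg N ∧ P * P = P ∧ LinearMap.range P = M ∧
      ∃ Ps : Fin n → Module.End F X,
        (∀ i, Ps i ∈ nestAlg N ∧ Ps i * Ps i = Ps i ∧
          Module.rank F (LinearMap.range (Ps i)) = 1) ∧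
        P = ∑ i, Ps i := by
  obtain ⟨P, h1, h2, h3, Ps, hPs, hsum⟩ := aux hN n M ‹_› hn
  exact ⟨P, h1, h2, h3, Ps, fun i => ⟨(hPs i).1, (hPs i).2.1, (hPs i).2.2.2⟩, hsum⟩
end

section
/- Let 𝔑 be a nest in a vector space 𝔛 and let T ∈ Alg 𝔑 have finite rank n. Then T is a sum of n operators in Alg 𝔑, each of rank at most one. -/
variable {F X : Type*} [Field F] [AddCommGroup X] [Module F X]

private lemma nestAlg_sub_mem {N : Set (Submodule F X)} {T R : Module.End F X}
    (hT : T ∈ nestAlg N) (hR : R ∈ nestAlg N) : T - R ∈ nestAlg N := by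
  intro M hM x hx
  exact M.sub_mem (hT M hM x hx) (hR M hM x hx)

private lemma nestAlg_step {N : Set (Submodule F X)} (hch : IsChain (· ≤ ·) N)
    (htop : (⊤ : Submodule F X) ∈ N)
    {T : Module.End F X} (hT : T ∈ nestAlg N)
    [hfin : FiniteDimensional F (LinearMap.range T)] {n : ℕ}
    (hn : Module.finrank F (LinearMap.range T) = n + 1) :
    ∃ R : Module.End F X, R ∈ nestAlg N ∧ Module.rank F (LinearMap.range R) ≤ 1 ∧
      ∃ _ : FiniteDimensional F (LinearMap.range (T - R)),
      Module.finrank F (LinearMap.range (T - R)) = n := by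
  classical
  set V := LinearMap.range T with hV
  have hVfin : FiniteDimensional F V := hfin
  -- pick M₁ of minimal nonzero image dimension
  set A : Set ℕ := {k | ∃ M ∈ N, Submodule.map T M ≠ ⊥ ∧
      Module.finrank F (Submodule.map T M) = k} with hA
  have hAne : A.Nonempty := by
    refine ⟨_, ⊤, htop, ?_, rfl⟩
    rw [Submodule.map_top, ← hV]
    intro h; rw [h, finrank_bot] at hn; omega
  obtain ⟨M₁, hM₁N, hM₁ne, hM₁k⟩ := Nat.sInf_mem hAne
  have fdmap : ∀ M ∈ N, FiniteDimensional F (Submodule.map T M) := fun M _ =>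
    Submodule.finiteDimensional_of_le (S₂ := V) LinearMap.map_le_range
  have hmin : ∀ M ∈ N, Submodule.map T M ≠ ⊥ → Submodule.map T M₁ ≤ Submodule.map T M := by
    intro M hM hMne
    rcases eq_or_ne M M₁ with rfl | hne
    · exact le_rfl
    rcases hch hM hM₁N hne with h | h
    · have := fdmap M₁ hM₁N
      have hle : Submodule.map T M ≤ Submodule.map T M₁ := Submodule.map_mono h
      have : Submodule.map T M = Submodule.map T M₁ := by
        apply Submodule.eq_of_le_of_finrank_le hle
        rw [hM₁k]
        exact Nat.sInf_le ⟨M, hM, hMne, rfl⟩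
      rw [this]
    · exact Submodule.map_mono h
  -- pick e ∈ T(M₁), e ≠ 0
  obtain ⟨e, heM₁, he0⟩ := Submodule.exists_mem_ne_zero_of_ne_bot hM₁ne
  have heV : e ∈ V := by rw [hV]; exact LinearMap.map_le_range heM₁
  set e' : V := ⟨e, heV⟩ with he'
  have he'0 : e' ≠ 0 := by
    intro h; apply he0; exact congrArg Subtype.val h
  -- complement of span e' in V
  obtain ⟨W, hW⟩ := Submodule.exists_isCompl (F ∙ e')
  set π := Submodule.projectionOnto _ _ hW with hπ
  set R : Module.End F X := V.subtype ∘ₗ (F ∙ e').subtype ∘ₗ π ∘ₗ T.rangeRestrict with hR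
  have hRx : ∀ x : X, R x = ((π (T.rangeRestrict x) : V) : X) := fun x => rfl
  have hRspan : ∀ x : X, R x ∈ (F ∙ e) := by
    intro x
    rw [hRx]
    obtain ⟨c, hc⟩ := Submodule.mem_span_singleton.mp (π (T.rangeRestrict x)).2
    rw [← hc]
    exact Submodule.mem_span_singleton.mpr ⟨c, rfl⟩
  refine ⟨R, ?_, ?_, ?_⟩
  · -- R ∈ nestAlg N
    intro M hM x hx
    by_cases hMb : Submodule.map T M = ⊥
    · have hTx : T x = 0 := by
        have : T x ∈ Submodule.map T M := Submodule.mem_map_of_mem hx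
        rw [hMb] at this; exact this
      have : T.rangeRestrict x = 0 := by
        apply Subtype.ext; simpa using hTx
      rw [hRx, this]
      simp
    · have heM : e ∈ M := by
        have : e ∈ Submodule.map T M := hmin M hM hMb heM₁
        obtain ⟨y, hy, hye⟩ := this
        exact hye ▸ hT M hM y hy
      have : (F ∙ e) ≤ M := Submodule.span_le.mpr (by simpa using heM)
      exact this (hRspan x)
  · -- rank ≤ 1
    have hle : LinearMap.range R ≤ (F ∙ e) := by
      rintro _ ⟨x, rfl⟩; exact hRspan x
    calc Module.rank F (LinearMap.range R) ≤ Module.rank F (F ∙ e) :=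
          Submodule.rank_mono hle
      _ ≤ 1 := by simpa using rank_span_le (R := F) {e}
  · -- range (T - R) = W mapped into X, of finrank n
    have key : ∀ x : X, (T - R) x = ((T.rangeRestrict x - ((π (T.rangeRestrict x) : V)) : V) : X) := by
      intro x
      simp [hRx, LinearMap.sub_apply]
    have memW : ∀ v : V, v - (π v : V) ∈ W := by
      intro v
      obtain ⟨a, ha, b, hb, hab⟩ := Submodule.mem_sup.mp
        (by rw [hW.sup_eq_top]; trivial : v ∈ (F ∙ e') ⊔ W)
      have hπv : π v = ⟨a, ha⟩ := by
        rw [← hab, map_add, Submodule.projectionOnto_apply_of_mem_right hW hb,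
          add_zero]
        exact Submodule.projectionOnto_apply_left hW ⟨a, ha⟩
      rw [hπv, ← hab]
      simpa using hb
    have hrange : LinearMap.range (T - R) = W.map V.subtype := by
      apply le_antisymm
      · rintro _ ⟨x, rfl⟩
        rw [key]
        exact ⟨_, memW _, rfl⟩
      · rintro _ ⟨w, hw, rfl⟩
        obtain ⟨x, hx⟩ : ∃ x, T.rangeRestrict x = w := by
          obtain ⟨x, hx⟩ := (w : V).2
          exact ⟨x, Subtype.ext hx⟩
        refine ⟨x, ?_⟩
        rw [key, hx]
        have : π w = 0 := Submodule.projectionOnto_apply_right hW ⟨w, hw⟩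
        rw [this]
        simp
    have hWfd : FiniteDimensional F W := inferInstance
    have hfd : FiniteDimensional F (LinearMap.range (T - R)) := by
      rw [hrange]; infer_instance
    refine ⟨hfd, ?_⟩
    have h1 : Module.finrank F (F ∙ e') + Module.finrank F W = n + 1 := by
      rw [Submodule.finrank_add_eq_of_isCompl hW, ← hn]
    rw [finrank_span_singleton he'0] at h1
    have h2 : Module.finrank F (W.map V.subtype) = Module.finrank F W :=
      Submodule.finrank_map_subtype_eq V W
    rw [hrange, h2]; omega

private lemma nestAlg_aux {N : Set (Submodule F X)} (hch : IsChain (· ≤ ·) N)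
    (htop : (⊤ : Submodule F X) ∈ N) :
    ∀ (n : ℕ) (T : Module.End F X), T ∈ nestAlg N →
    ∀ (_ : FiniteDimensional F (LinearMap.range T)),
    Module.finrank F (LinearMap.range T) = n →
    ∃ Ts : Fin n → Module.End F X,
      (∀ i, Ts i ∈ nestAlg N ∧ Module.rank F (LinearMap.range (Ts i)) ≤ 1) ∧
      T = ∑ i, Ts i := by
  intro n
  induction n with
  | zero =>
    intro T hT hfin hn
    refine ⟨fun i => 0, fun i => i.elim0, ?_⟩
    rw [Fin.sum_univ_zero]
    rw [Submodule.finrank_eq_zero] at hn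
    rwa [LinearMap.range_eq_bot] at hn
  | succ n ih =>
    intro T hT hfin hn
    obtain ⟨R, hRalg, hRrk, hfd, hrk⟩ := nestAlg_step hch htop hT hn
    obtain ⟨Ts', hTs', hsum⟩ := ih (T - R) (nestAlg_sub_mem hT hRalg) hfd hrk
    refine ⟨Fin.cons R Ts', ?_, ?_⟩
    · intro i
      refine Fin.cases ?_ ?_ i
      · exact ⟨hRalg, hRrk⟩
      · intro j; exact hTs' j
    · rw [Fin.sum_cons, ← hsum]
      abel

/-- a rank-`n` operator in `Alg 𝔑` is a sum of `n` operators of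
rank at most one in `Alg 𝔑`. -/
theorem finite_rank_decomposition {N : Set (Submodule F X)} (hN : IsNest N)
    {T : Module.End F X} (hT : T ∈ nestAlg N)
    [FiniteDimensional F (LinearMap.range T)] {n : ℕ}
    (hn : Module.finrank F (LinearMap.range T) = n) :
    ∃ Ts : Fin n → Module.End F X,
      (∀ i, Ts i ∈ nestAlg N ∧ Module.rank F (LinearMap.range (Ts i)) ≤ 1) ∧
      T = ∑ i, Ts i :=
  nestAlg_aux hN.1 hN.2.2.1 n T hT ‹_› hn
end

section
/- Let 𝔑 be a nest in a vector space 𝔛. The linear span of the rank-one operators in Alg 𝔑 is strictly dense in Alg 𝔑: for every T ∈ Alg 𝔑 and every finite subset F ⊆ 𝔛, there exists S in the span of the rank-one operators of Alg 𝔑 with Sx = Tx for all x ∈ F. -/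
variable {F X : Type*} [Field F] [AddCommGroup X] [Module F X]

open Submodule Module

section Aux

variable {N : Set (Submodule F X)}

lemma nestAt_mem (hN : IsNest N) (x : X) : nestAt N x ∈ N :=
  (hN.2.2.2 _ (fun _ hM => hM.1)).1

lemma mem_nestAt (N : Set (Submodule F X)) (x : X) : x ∈ nestAt N x :=
  Submodule.mem_sInf.2 fun _ hM => hM.2

lemma nestAt_le {M : Submodule F X} (hM : M ∈ N) {x : X} (hx : x ∈ M) : nestAt N x ≤ M :=
  sInf_le ⟨hM, hx⟩

lemma chain_total (hN : IsNest N) {p q : Submodule F X} (hp : p ∈ N) (hq : q ∈ N) :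
    p ≤ q ∨ q ≤ p := by
  rcases eq_or_ne p q with rfl | h
  · exact Or.inl le_rfl
  · exact hN.1 hp hq h

/-- In a finite set there is an element whose `nestAt` dominates all others. -/
lemma exists_nestAt_max (hN : IsNest N) (s : Finset X) (hs : s.Nonempty) :
    ∃ b ∈ s, ∀ a ∈ s, nestAt N a ≤ nestAt N b := by
  classical
  induction s using Finset.induction_on with
  | empty => simp at hs
  | @insert x s hx ih =>
    rcases s.eq_empty_or_nonempty with rfl | hsne
    · exact ⟨x, by simp, by simp⟩
    · obtain ⟨b, hbs, hb⟩ := ih hsne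
      rcases chain_total hN (nestAt_mem hN x) (nestAt_mem hN b) with h | h
      · exact ⟨b, Finset.mem_insert_of_mem hbs, fun a ha => by
          rcases Finset.mem_insert.1 ha with rfl | ha
          · exact h
          · exact hb a ha⟩
      · exact ⟨x, Finset.mem_insert_self x s, fun a ha => by
          rcases Finset.mem_insert.1 ha with rfl | ha
          · exact le_rfl
          · exact (hb a ha).trans h⟩

lemma mem_sSup_chain (hN : IsNest N) {S : Set (Submodule F X)} (hS : S ⊆ N) {x : X}
    (hx : x ∈ sSup S) (hx0 : x ≠ 0) : ∃ M ∈ S, x ∈ M := by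
  rcases S.eq_empty_or_nonempty with rfl | hne
  · rw [sSup_empty, Submodule.mem_bot] at hx
    exact absurd hx hx0
  · exact (Submodule.mem_sSup_of_directed hne ((hN.1.mono hS).directedOn)).1 hx

/-- A complement of a line `F b` inside `Y` containing a prescribed subspace `D`. -/
lemma exists_compl_avoiding (Y D : Submodule F X) (hDY : D ≤ Y) {b : X} (hbY : b ∈ Y)
    (hbD : b ∉ D) :
    ∃ C : Submodule F X, D ≤ C ∧ C ≤ Y ∧ b ∉ C ∧ Y ≤ C ⊔ span F {b} := by
  set D' : Submodule F Y := (D ⊔ span F {b}).comap Y.subtype with hD'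
  obtain ⟨E, hE⟩ := D'.exists_isCompl
  refine ⟨D ⊔ E.map Y.subtype, le_sup_left, sup_le hDY (map_subtype_le Y E), ?_, ?_⟩
  · intro hb
    obtain ⟨d, hd, e, he, hde⟩ := Submodule.mem_sup.1 hb
    obtain ⟨e', he', rfl⟩ := he
    have heD' : e' ∈ D' := by
      have : (e' : X) ∈ D ⊔ span F {b} := by
        have : (e' : X) = b - d := by rw [← hde]; abel
        rw [this]
        exact sub_mem (mem_sup_right (mem_span_singleton_self b)) (mem_sup_left hd)
      exact this
    have he0 : e' = 0 := by
      have := hE.disjoint.le_bot (Submodule.mem_inf.2 ⟨heD', he'⟩)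
      simpa using this
    rw [he0] at hde
    simp only [map_zero, ZeroMemClass.coe_zero, add_zero] at hde
    exact hbD (hde ▸ hd)
  · intro y hy
    have : (⟨y, hy⟩ : Y) ∈ D' ⊔ E := by rw [hE.sup_eq_top]; trivial
    obtain ⟨p, hp, e, he, hpe⟩ := Submodule.mem_sup.1 this
    have hy' : y = (p : X) + (e : X) := by
      have := congrArg (Subtype.val) hpe
      simpa using this.symm
    rw [hy']
    have hp' : (p : X) ∈ D ⊔ span F {b} := hp
    have he' : (e : X) ∈ E.map Y.subtype := ⟨e, he, rfl⟩
    rcases Submodule.mem_sup.1 hp' with ⟨d, hd, v, hv, hdv⟩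
    rw [← hdv, add_right_comm]
    exact add_mem (mem_sup_left (add_mem (mem_sup_left hd) (mem_sup_right he')))
      (mem_sup_right hv)

lemma exists_dual_one (U : Submodule F X) {b : X} (hb : b ∉ U) :
    ∃ f : Module.Dual F X, f b = 1 ∧ ∀ u ∈ U, f u = 0 := by
  obtain ⟨g, hg1, hg2⟩ := Submodule.exists_dual_map_eq_bot_of_notMem hb inferInstance
  refine ⟨(g b)⁻¹ • g, by simp [inv_mul_cancel₀ hg1], fun u hu => ?_⟩
  have hgu : g u = 0 := by
    have : g u ∈ U.map g := Submodule.mem_map_of_mem hu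
    rwa [hg2, Submodule.mem_bot] at this
  simp [hgu]

lemma rank_one_smulRight (f : Module.Dual F X) {y : X} (hy : y ≠ 0) {b : X} (hfb : f b = 1) :
    Module.rank F (LinearMap.range (f.smulRight y)) = 1 := by
  have hr : LinearMap.range (f.smulRight y) = span F {y} := by
    apply le_antisymm
    · rintro _ ⟨u, rfl⟩
      simpa using smul_mem _ (f u) (mem_span_singleton_self y)
    · rw [span_le, Set.singleton_subset_iff]
      exact ⟨b, by simp [hfb]⟩
  rw [hr]
  have := rank_span_set (R := F) (M := X) (s := ({y} : Set X))
    (LinearIndepOn.singleton (R := F) (v := id) hy)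
  simpa using this

end Aux

/-- Main recursion: given the chain invariant relating `W` and `Z`, one can interpolate `T`
on `W` by a span of rank ones while vanishing on `Z`. -/
lemma key_lemma {N : Set (Submodule F X)} (hN : IsNest N) :
    ∀ (n : ℕ) (T : Module.End F X), T ∈ nestAlg N → ∀ (W Z : Submodule F X),
      FiniteDimensional F W → Module.finrank F W ≤ n → Z ⊓ W = ⊥ →
      (∀ M ∈ N, (W ⊔ Z) ⊓ M ≤ W ∨ W ≤ M) →
      ∃ S ∈ Submodule.span F
        {R : Module.End F X | R ∈ nestAlg N ∧ Module.rank F (LinearMap.range R) = 1},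
        (∀ w ∈ W, S w = T w) ∧ ∀ z ∈ Z, S z = 0 := by
  intro n
  induction n with
  | zero =>
    intro T hT W Z hfin hrank hZW hinv
    haveI := hfin
    have hW : W = ⊥ := Submodule.finrank_eq_zero.1 (Nat.le_zero.1 hrank)
    refine ⟨0, zero_mem _, ?_, ?_⟩
    · intro w hw
      rw [hW, Submodule.mem_bot] at hw
      simp [hw]
    · intro z _; rfl
  | succ n ih =>
    intro T hT W Z hfin hrank hZW hinv
    haveI := hfin
    by_cases hW : W = ⊥
    · refine ⟨0, zero_mem _, ?_, ?_⟩
      · intro w hw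
        rw [hW, Submodule.mem_bot] at hw
        simp [hw]
      · intro z _; rfl
    -- choose a spanning finset of W
    obtain ⟨s, hspan⟩ : ∃ s : Finset X, span F (s : Set X) = W := by
      obtain ⟨s, hs⟩ := (Module.Finite.iff_fg.1 hfin)
      exact ⟨s, hs⟩
    rcases s.eq_empty_or_nonempty with rfl | hsne
    · exfalso; apply hW; rw [← hspan]; simp
    -- b : element with maximal nestAt
    obtain ⟨b, hbs, hbmax⟩ := exists_nestAt_max hN s hsne
    have hWle : W ≤ nestAt N b := by
      rw [← hspan, span_le]
      intro a ha
      exact hbmax a ha (mem_nestAt N a)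
    have hbW : b ∈ W := by rw [← hspan]; exact subset_span hbs
    have hb0 : b ≠ 0 := by
      rintro rfl
      apply hW
      refine le_bot_iff.1 (hWle.trans ?_)
      exact nestAt_le hN.2.1 (zero_mem ⊥)
    set Y : Submodule F X := W ⊔ Z with hY
    set Mb : Submodule F X := sSup {M | M ∈ N ∧ b ∉ M} with hMb
    have hMbsub : {M | M ∈ N ∧ b ∉ M} ⊆ N := fun _ hM => hM.1
    have hMbmem : ∀ {u : X}, u ∈ Mb → u ≠ 0 → ∃ M ∈ N, b ∉ M ∧ u ∈ M := by
      intro u hu hu0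
      obtain ⟨M, hM, huM⟩ := mem_sSup_chain hN hMbsub hu hu0
      exact ⟨M, hM.1, hM.2, huM⟩
    have hle_Mb : ∀ {M : Submodule F X}, M ∈ N → b ∉ M → M ≤ Mb :=
      fun hM hbM => le_sSup ⟨hM, hbM⟩
    set D : Submodule F X := (Y ⊓ Mb) ⊔ Z with hD
    have hbY : b ∈ Y := mem_sup_left hbW
    have hDY : D ≤ Y := sup_le inf_le_left le_sup_right
    -- b avoids D
    have hbD : b ∉ D := by
      intro hmem
      obtain ⟨m, hm, z, hz, hmz⟩ := Submodule.mem_sup.1 hmem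
      rcases eq_or_ne m 0 with rfl | hm0
      · rw [zero_add] at hmz
        subst hmz
        have : z ∈ Z ⊓ W := Submodule.mem_inf.2 ⟨hz, hbW⟩
        rw [hZW, Submodule.mem_bot] at this
        exact hb0 this
      · obtain ⟨M₁, hM₁, hbM₁, hmM₁⟩ := hMbmem hm.2 hm0
        rcases hinv M₁ hM₁ with h | h
        · have hmW : m ∈ W := h (Submodule.mem_inf.2 ⟨hm.1, hmM₁⟩)
          have hzW : z ∈ W := by
            have : z = b - m := by rw [← hmz]; abel
            rw [this]; exact sub_mem hbW hmW
          have : z ∈ Z ⊓ W := Submodule.mem_inf.2 ⟨hz, hzW⟩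
          rw [hZW, Submodule.mem_bot] at this
          rw [this, add_zero] at hmz
          exact hbM₁ (hmz ▸ hmM₁)
        · exact hbM₁ (h hbW)
    obtain ⟨C, hDC, hCY, hbC, hYle⟩ := exists_compl_avoiding Y D hDY hbY hbD
    -- b avoids Mb ⊔ C
    have hbMC : b ∉ Mb ⊔ C := by
      intro hmem
      obtain ⟨m, hm, u, hu, hmu⟩ := Submodule.mem_sup.1 hmem
      have hmY : m ∈ Y := by
        have : m = b - u := by rw [← hmu]; abel
        rw [this]; exact sub_mem hbY (hCY hu)
      have : m ∈ C := hDC (mem_sup_left (Submodule.mem_inf.2 ⟨hmY, hm⟩))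
      exact hbC (hmu ▸ add_mem this hu)
    obtain ⟨f, hfb, hf0⟩ := exists_dual_one (Mb ⊔ C) hbMC
    have hfMb : ∀ u ∈ Mb, f u = 0 := fun u hu => hf0 u (mem_sup_left hu)
    have hfC : ∀ u ∈ C, f u = 0 := fun u hu => hf0 u (mem_sup_right hu)
    set R : Module.End F X := f.smulRight (T b) with hR
    have hRapp : ∀ u : X, R u = f u • T b := fun u => rfl
    have hRalg : R ∈ nestAlg N := by
      intro M hM u hu
      rw [hRapp]
      by_cases hbM : b ∈ M
      · exact M.smul_mem _ (hT M hM b hbM)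
      · rw [hfMb u (hle_Mb hM hbM hu), zero_smul]
        exact zero_mem M
    have hRspan : R ∈ Submodule.span F
        {R : Module.End F X | R ∈ nestAlg N ∧ Module.rank F (LinearMap.range R) = 1} := by
      by_cases hTb : T b = 0
      · have : R = 0 := by ext u; simp [hRapp, hTb]
        rw [this]; exact zero_mem _
      · exact subset_span ⟨hRalg, rank_one_smulRight f hTb hfb⟩
    have hT' : T - R ∈ nestAlg N := by
      intro M hM u hu
      simp only [LinearMap.sub_apply]
      exact sub_mem (hT M hM u hu) (hRalg M hM u hu)
    set W' : Submodule F X := C ⊓ W with hW'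
    set Z' : Submodule F X := Z ⊔ span F {b} with hZ'
    haveI hfin' : FiniteDimensional F W' := Submodule.finiteDimensional_of_le inf_le_right
    have hlt : W' < W := lt_of_le_of_ne inf_le_right (by
      intro h
      exact hbC (Submodule.mem_inf.1 (h.symm ▸ hbW)).1)
    have hrank' : Module.finrank F W' ≤ n :=
      Nat.lt_succ_iff.1 (lt_of_lt_of_le (Submodule.finrank_lt_finrank_of_lt hlt) hrank)
    have hZC : Z ≤ C := le_trans le_sup_right hDC
    have hZW' : Z' ⊓ W' = ⊥ := by
      rw [eq_bot_iff]
      intro u hu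
      obtain ⟨huZ', huW'⟩ := Submodule.mem_inf.1 hu
      obtain ⟨huC, huW⟩ := Submodule.mem_inf.1 huW'
      obtain ⟨z, hz, v, hv, hzv⟩ := Submodule.mem_sup.1 huZ'
      obtain ⟨c, rfl⟩ := mem_span_singleton.1 hv
      have hcb : c • b ∈ C := by
        have : c • b = u - z := by rw [← hzv]; abel
        rw [this]; exact sub_mem huC (hZC hz)
      rcases eq_or_ne c 0 with rfl | hc
      · rw [zero_smul, add_zero] at hzv
        subst hzv
        have : z ∈ Z ⊓ W := Submodule.mem_inf.2 ⟨hz, huW⟩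
        rw [hZW] at this
        exact this
      · exact absurd (by simpa [smul_smul, inv_mul_cancel₀ hc] using C.smul_mem c⁻¹ hcb) hbC
    -- decomposition of W
    have hdecomp : ∀ w ∈ W, ∃ u ∈ W', ∃ c : F, w = u + c • b := by
      intro w hw
      obtain ⟨u, hu, v, hv, huv⟩ := Submodule.mem_sup.1 (hYle (mem_sup_left hw))
      obtain ⟨c, rfl⟩ := mem_span_singleton.1 hv
      refine ⟨u, Submodule.mem_inf.2 ⟨hu, ?_⟩, c, huv.symm⟩
      have : u = w - c • b := by rw [← huv]; abel
      rw [this]; exact sub_mem hw (W.smul_mem c hbW)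
    have hinv' : ∀ M ∈ N, (W' ⊔ Z') ⊓ M ≤ W' ∨ W' ≤ M := by
      intro M hM
      rcases hinv M hM with h | h
      · by_cases hbM : b ∈ M
        · exact Or.inr (le_trans inf_le_right (hWle.trans (nestAt_le hM hbM)))
        · refine Or.inl ?_
          intro u hu
          obtain ⟨hu1, hu2⟩ := Submodule.mem_inf.1 hu
          have huY : u ∈ Y := by
            refine (show W' ⊔ Z' ≤ Y from sup_le (le_trans inf_le_right le_sup_left)
              (sup_le le_sup_right (le_trans (span_le.2 ?_) le_sup_left))) hu1
            simpa using hbW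
          have huW : u ∈ W := h (Submodule.mem_inf.2 ⟨huY, hu2⟩)
          have huC : u ∈ C := hDC (mem_sup_left
            (Submodule.mem_inf.2 ⟨huY, hle_Mb hM hbM hu2⟩))
          exact Submodule.mem_inf.2 ⟨huC, huW⟩
      · exact Or.inr (le_trans inf_le_right h)
    obtain ⟨S', hS'span, hS'W, hS'Z⟩ := ih (T - R) hT' W' Z' hfin' hrank' hZW' hinv'
    have hS'b : S' b = 0 := hS'Z b (mem_sup_right (mem_span_singleton_self b))
    refine ⟨R + S', add_mem hRspan hS'span, ?_, ?_⟩
    · intro w hw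
      obtain ⟨u, huW', c, rfl⟩ := hdecomp w hw
      have huC : u ∈ C := (Submodule.mem_inf.1 huW').1
      have hfu : f u = 0 := hfC u huC
      have hRu : R u = 0 := by rw [hRapp, hfu, zero_smul]
      have hS'u : S' u = T u := by
        have := hS'W u huW'
        simpa [LinearMap.sub_apply, hRu] using this
      simp only [LinearMap.add_apply, map_add, map_smul, hRapp, hS'u, hS'b, hRu,
        hfu, hfb, map_add, zero_add, smul_zero, add_zero, mul_one, smul_eq_mul]
      rw [zero_smul, one_smul, zero_add]
    · intro z hz
      have hzC : z ∈ C := hZC hz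
      simp [LinearMap.add_apply, hRapp, hfC z hzC, hS'Z z (mem_sup_left hz)]

/-- the span of the rank-one operators in `Alg 𝔑` is strictly dense. -/
theorem span_rankOne_strictly_dense {N : Set (Submodule F X)} (hN : IsNest N)
    {T : Module.End F X} (hT : T ∈ nestAlg N) (Fs : Finset X) :
    ∃ S ∈ Submodule.span F
      {R : Module.End F X | R ∈ nestAlg N ∧ Module.rank F (LinearMap.range R) = 1},
      ∀ x ∈ Fs, S x = T x := by
  obtain ⟨S, hS, hSW, -⟩ := key_lemma hN (Module.finrank F (span F (Fs : Set X))) T hT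
    (span F (Fs : Set X)) ⊥ inferInstance le_rfl (by simp)
    (fun M _ => Or.inl (le_trans inf_le_left (by simp)))
  exact ⟨S, hS, fun x hx => hSW x (Submodule.subset_span hx)⟩
end

section
/- Let 𝔑 be a nest in a vector space 𝔛 and let 𝔑^⊥ = {M^⊥ : M ∈ 𝔑} be the dual family of subspaces of the algebraic dual 𝔛′. Then 𝔑^⊥ is complete (closed under arbitrary intersections and under unions of chains, with these operations yielding members of 𝔑^⊥) if and only if 𝔑 is well-ordered by inclusion (equivalently, 𝔑 contains no strictly decreasing infinite sequence of subspaces). -/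
variable {F X : Type*} [Field F] [AddCommGroup X] [Module F X]

/-- In a chain with no strictly decreasing sequence, every nonempty subset has a minimum. -/
lemma exists_min_of_no_desc {α : Type*} [PartialOrder α] {N T : Set α}
    (hc : IsChain (· ≤ ·) N)
    (hno : ¬∃ f : ℕ → α, (∀ n, f n ∈ N) ∧ StrictAnti f)
    (hT : T ⊆ N) (hne : T.Nonempty) : ∃ m ∈ T, ∀ M ∈ T, m ≤ M := by
  by_contra h
  push_neg at h
  have hg : ∀ m : T, ∃ m' : T, (m' : α) < m := by
    rintro ⟨m, hm⟩
    obtain ⟨M, hM, hMm⟩ := h m hm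
    have hlt : M < m := by
      rcases eq_or_ne M m with rfl | hne'
      · exact absurd le_rfl hMm
      · rcases hc (hT hM) (hT hm) hne' with h1 | h1
        · exact lt_of_le_of_ne h1 hne'
        · exact absurd h1 hMm
    exact ⟨⟨M, hM⟩, hlt⟩
  choose g hglt using hg
  obtain ⟨x0, hx0⟩ := hne
  refine hno ⟨fun n => (g^[n] ⟨x0, hx0⟩ : T), fun n => hT (g^[n] ⟨x0, hx0⟩).2, ?_⟩
  apply strictAnti_nat_of_succ_lt
  intro n
  rw [Function.iterate_succ_apply']
  exact hglt _

/-- Coefficient lemma: given a strictly decreasing sequence of subspaces and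
`x n ∈ f n \ f (n+1)`, any linear combination lying in `⨅ n, f n` has all
coefficients zero. -/
lemma coeffs_zero {f : ℕ → Submodule F X} (hf : StrictAnti f) {x : ℕ → X}
    (hx : ∀ n, x n ∈ f n) (hx' : ∀ n, x n ∉ f (n + 1)) :
    ∀ s : Finset ℕ, ∀ g : ℕ → F, (∑ i ∈ s, g i • x i) ∈ (⨅ n, f n) →
      ∀ i ∈ s, g i = 0 := by
  intro s
  induction s using Finset.strongInduction with
  | _ s ih =>
    intro g hsum i hi
    have hne : s.Nonempty := ⟨i, hi⟩
    set n₀ := s.min' hne with hn₀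
    have hn₀s : n₀ ∈ s := s.min'_mem hne
    have herase : (∑ j ∈ s.erase n₀, g j • x j) ∈ f (n₀ + 1) := by
      apply Submodule.sum_mem
      intro j hj
      have hj1 : n₀ + 1 ≤ j := by
        have := s.min'_le j (Finset.mem_of_mem_erase hj)
        have hne' := Finset.ne_of_mem_erase hj
        omega
      exact Submodule.smul_mem _ _ (hf.antitone hj1 (hx j))
    have hsum' : (∑ j ∈ s, g j • x j) ∈ f (n₀ + 1) := iInf_le f (n₀ + 1) hsum
    have hmain : g n₀ • x n₀ ∈ f (n₀ + 1) := by
      have hdecomp : g n₀ • x n₀ = (∑ j ∈ s, g j • x j) - ∑ j ∈ s.erase n₀, g j • x j := by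
        rw [← Finset.add_sum_erase s _ hn₀s]; abel
      rw [hdecomp]
      exact Submodule.sub_mem _ hsum' herase
    have hg0 : g n₀ = 0 := by
      by_contra hg
      exact hx' n₀ (by simpa [smul_smul, inv_mul_cancel₀ hg] using
        Submodule.smul_mem _ (g n₀)⁻¹ hmain)
    rcases eq_or_ne i n₀ with rfl | hine
    · exact hg0
    · refine ih (s.erase n₀) (Finset.erase_ssubset hn₀s) g ?_ i (Finset.mem_erase.2 ⟨hine, hi⟩)
      have : (∑ j ∈ s.erase n₀, g j • x j) = ∑ j ∈ s, g j • x j := by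
        rw [← Finset.add_sum_erase s _ hn₀s, hg0, zero_smul, zero_add]
      rw [this]; exact hsum

/-- Existence of a functional annihilating `⨅ n, f n` but no `f n`. -/
lemma exists_functional_s10 {f : ℕ → Submodule F X} (hf : StrictAnti f) :
    ∃ φ : Module.Dual F X, φ ∈ (⨅ n, f n).dualAnnihilator ∧
      ∀ n, φ ∉ (f n).dualAnnihilator := by
  have hxs : ∀ n, ∃ x, x ∈ f n ∧ x ∉ f (n + 1) := by
    intro n
    exact SetLike.exists_of_lt (hf (Nat.lt_succ_self n))
  choose x hx hx' using hxs
  set M : Submodule F X := ⨅ n, f n with hM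
  let v : ℕ → X ⧸ M := fun n => M.mkQ (x n)
  have hv : LinearIndependent F v := by
    rw [linearIndependent_iff']
    intro s g hsum i hi
    have h0 : M.mkQ (∑ j ∈ s, g j • x j) = 0 := by
      rw [map_sum]
      simpa [v] using hsum
    have : (∑ j ∈ s, g j • x j) ∈ M := by
      rwa [← LinearMap.mem_ker, Submodule.ker_mkQ] at h0
    exact coeffs_zero hf hx hx' s g this i hi
  have hvr := (linearIndepOn_id_range_iff hv.injective).2 hv
  let b := Module.Basis.extend hvr
  let ψ : (X ⧸ M) →ₗ[F] F := b.constr F (fun _ => (1 : F))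
  have hψ : ∀ n, ψ (v n) = 1 := by
    intro n
    have hmem : v n ∈ hvr.extend (Set.subset_univ _) :=
      hvr.subset_extend _ ⟨n, rfl⟩
    have : v n = b ⟨v n, hmem⟩ := (Module.Basis.extend_apply_self hvr ⟨v n, hmem⟩).symm
    rw [this]
    exact Module.Basis.constr_basis _ _ _ _
  refine ⟨ψ ∘ₗ M.mkQ, ?_, ?_⟩
  · rw [Submodule.mem_dualAnnihilator]
    intro w hw
    have : M.mkQ w = 0 := (Submodule.Quotient.mk_eq_zero M).2 hw
    simp [this]
  · intro n hmem
    rw [Submodule.mem_dualAnnihilator] at hmem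
    have := hmem (x n) (hx n)
    simp only [LinearMap.comp_apply] at this
    rw [hψ n] at this
    exact one_ne_zero this

/-- the dual nest `𝔑^⊥` is complete iff `𝔑` is well-ordered by
inclusion (no strictly decreasing infinite sequence). -/
theorem dual_nest_complete_iff_wellOrdered {N : Set (Submodule F X)} (hN : IsNest N) :
    (∀ S ⊆ Submodule.dualAnnihilator '' N,
        sInf S ∈ Submodule.dualAnnihilator '' N ∧
        sSup S ∈ Submodule.dualAnnihilator '' N) ↔
      ¬∃ f : ℕ → Submodule F X, (∀ n, f n ∈ N) ∧ StrictAnti f := by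
  obtain ⟨hchain, hbot, htop, hclosed⟩ := hN
  constructor
  · rintro hcomp ⟨f, hfN, hf⟩
    set S : Set (Submodule F (Module.Dual F X)) :=
      Submodule.dualAnnihilator '' (Set.range f) with hS
    have hSN : S ⊆ Submodule.dualAnnihilator '' N := Set.image_mono (by
      rintro _ ⟨n, rfl⟩; exact hfN n)
    obtain ⟨-, M, hMN, hMsup⟩ := hcomp S hSN
    -- sSup S = ⨆ n, (f n)ᗮ
    have hsupS : sSup S = ⨆ n, (f n).dualAnnihilator := by
      rw [hS, ← Set.range_comp, sSup_range]; rfl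
    -- M ≤ f n for all n
    have hMle : ∀ n, M ≤ f n := by
      intro n
      rw [← Subspace.dualAnnihilator_le_dualAnnihilator_iff]
      rw [hMsup, hsupS]
      exact le_iSup (fun n => (f n).dualAnnihilator) n
    obtain ⟨φ, hφinf, hφn⟩ := exists_functional_s10 hf
    have hφM : φ ∈ M.dualAnnihilator := by
      have : M ≤ ⨅ n, f n := le_iInf hMle
      exact Submodule.dualAnnihilator_anti this hφinf
    rw [hMsup, hsupS] at hφM
    have hdir : Directed (· ≤ ·) (fun n => (f n).dualAnnihilator) := by
      apply Monotone.directed_le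
      intro a b hab
      exact Submodule.dualAnnihilator_anti (hf.antitone hab)
    obtain ⟨n, hn⟩ := (Submodule.mem_iSup_of_directed _ hdir).1 hφM
    exact hφn n hn
  · intro hno S hSN
    set T : Set (Submodule F X) := {M | M ∈ N ∧ M.dualAnnihilator ∈ S} with hT
    have hTN : T ⊆ N := fun M hM => hM.1
    have hST : Submodule.dualAnnihilator '' T = S := by
      apply Set.Subset.antisymm
      · rintro _ ⟨M, hM, rfl⟩; exact hM.2
      · intro φ hφ
        obtain ⟨M, hMN, rfl⟩ := hSN hφ
        exact ⟨M, ⟨hMN, hφ⟩, rfl⟩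
    constructor
    · -- sInf S = (sSup T)ᗮ
      refine ⟨sSup T, (hclosed T hTN).2, ?_⟩
      rw [← hST, sInf_image']
      rw [sSup_eq_iSup' T, Submodule.dualAnnihilator_iSup_eq]
    · rcases T.eq_empty_or_nonempty with hTe | hTne
      · have : S = ∅ := by rw [← hST, hTe, Set.image_empty]
        rw [this, sSup_empty]
        exact ⟨⊤, htop, Submodule.dualAnnihilator_top⟩
      · obtain ⟨m, hmT, hmin⟩ := exists_min_of_no_desc hchain hno hTN hTne
        refine ⟨m, hTN hmT, ?_⟩
        apply le_antisymm
        · exact le_sSup (hST ▸ ⟨m, hmT, rfl⟩)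
        · apply sSup_le
          intro φ hφ
          rw [← hST] at hφ
          obtain ⟨M, hMT, rfl⟩ := hφ
          exact Submodule.dualAnnihilator_anti (hmin M hMT)
end

section
/- Let M₁ ⊋ M₂ ⊋ ⋯ be a strictly decreasing sequence of subspaces of a vector space 𝔛 with intersection M_∞ = ⋂_n M_n. Then there exists a linear functional φ on 𝔛 with φ(x_n) = 1 for all n (where x_n ∈ M_n \ M_{n+1} are chosen arbitrarily) and M_∞ ⊆ ker φ; consequently ⋃_{n} M_n^⊥ is strictly contained in M_∞^⊥. -/
variable {F X : Type*} [Field F] [AddCommGroup X] [Module F X]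

/-- there is a functional `φ` with `φ(xₙ) = 1` for all `n` and
`⋂ₙ Mₙ ⊆ ker φ`; consequently `⋃ₙ Mₙ^⊥ ⊊ (⋂ₙ Mₙ)^⊥`. -/
theorem exists_functional_of_strictAnti {M : ℕ → Submodule F X}
    (hM : StrictAnti M) {x : ℕ → X} (hx : ∀ n, x n ∈ M n ∧ x n ∉ M (n + 1)) :
    (∃ φ : Module.Dual F X, (∀ n, φ (x n) = 1) ∧ (⨅ n, M n) ≤ LinearMap.ker φ) ∧
    (⋃ n, ((M n).dualAnnihilator : Set (Module.Dual F X))) ⊂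
      ↑((⨅ n, M n).dualAnnihilator) := by
  classical
  set K : Submodule F X := ⨅ n, M n with hK
  have hKle : ∀ n, K ≤ M n := fun n => iInf_le _ n
  have hanti : Antitone M := hM.antitone
  -- linear independence of the images in the quotient
  have hli : LinearIndependent F (fun n => Submodule.Quotient.mk (p := K) (x n)) := by
    rw [linearIndependent_iff']
    intro s g hsum i hi
    by_contra hgi
    set T : Finset ℕ := s.filter (fun j => g j ≠ 0) with hT
    have hTne : T.Nonempty := ⟨i, by simp [hT, hi, hgi]⟩
    set m : ℕ := T.min' hTne with hm
    have hmT : m ∈ T := T.min'_mem hTne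
    have hms : m ∈ s := (Finset.mem_filter.mp hmT).1
    have hgm : g m ≠ 0 := (Finset.mem_filter.mp hmT).2
    have hsumK : (∑ j ∈ s, g j • x j) ∈ K := by
      have : Submodule.Quotient.mk (p := K) (∑ j ∈ s, g j • x j) = 0 := by
        rw [← hsum]
        simp only [← Submodule.mkQ_apply, map_sum, map_smul]
      simpa [Submodule.Quotient.mk_eq_zero] using this
    have hrest : (∑ j ∈ s.erase m, g j • x j) ∈ M (m + 1) := by
      refine Submodule.sum_mem _ fun j hj => ?_
      rcases eq_or_ne (g j) 0 with h0 | h0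
      · simp [h0]
      · have hjs : j ∈ s := Finset.mem_of_mem_erase hj
        have hjT : j ∈ T := Finset.mem_filter.mpr ⟨hjs, h0⟩
        have hjm : m ≤ j := T.min'_le j hjT
        have hjne : j ≠ m := Finset.ne_of_mem_erase hj
        have : m + 1 ≤ j := lt_of_le_of_ne hjm (Ne.symm hjne)
        exact Submodule.smul_mem _ _ (hanti this (hx j).1)
    have hsplit : g m • x m = (∑ j ∈ s, g j • x j) - (∑ j ∈ s.erase m, g j • x j) := by
      rw [← Finset.add_sum_erase s _ hms]; abel
    have hmem : g m • x m ∈ M (m + 1) := by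
      rw [hsplit]
      exact Submodule.sub_mem _ (hKle (m + 1) hsumK) hrest
    have : x m ∈ M (m + 1) := by
      have := Submodule.smul_mem _ (g m)⁻¹ hmem
      rwa [smul_smul, inv_mul_cancel₀ hgm, one_smul] at this
    exact (hx m).2 this
  -- extend to a basis of the quotient and build the functional
  have hlis : LinearIndependent F ((↑) : Set.range (fun n => Submodule.Quotient.mk (p := K) (x n)) → X ⧸ K) :=
    (linearIndepOn_id_range_iff hli.injective).mpr hli
  let B := Module.Basis.extend hlis
  let ψ : (X ⧸ K) →ₗ[F] F := B.constr F (fun _ => (1 : F))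
  have hψ : ∀ n, ψ (Submodule.Quotient.mk (p := K) (x n)) = 1 := by
    intro n
    have hmem : Submodule.Quotient.mk (p := K) (x n) ∈ LinearIndepOn.extend (v := id) hlis (Set.subset_univ _) :=
      LinearIndepOn.subset_extend (v := id) hlis _ ⟨n, rfl⟩
    have hb : B ⟨_, hmem⟩ = Submodule.Quotient.mk (p := K) (x n) :=
      Module.Basis.extend_apply_self hlis ⟨_, hmem⟩
    calc ψ (Submodule.Quotient.mk (p := K) (x n)) = ψ (B ⟨_, hmem⟩) := by rw [hb]
    _ = 1 := B.constr_basis F _ _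
  let φ : Module.Dual F X := ψ.comp K.mkQ
  have hφx : ∀ n, φ (x n) = 1 := fun n => hψ n
  have hφK : K ≤ LinearMap.ker φ := by
    intro v hv
    simp only [φ, LinearMap.mem_ker, LinearMap.comp_apply, Submodule.mkQ_apply]
    rw [(Submodule.Quotient.mk_eq_zero K).mpr hv, map_zero]
  refine ⟨⟨φ, hφx, hφK⟩, ?_, ?_⟩
  · refine Set.iUnion_subset fun n f hf => ?_
    rw [SetLike.mem_coe, Submodule.mem_dualAnnihilator] at hf ⊢
    exact fun w hw => hf w (hKle n hw)
  · intro hsub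
    have hφmem : φ ∈ (K.dualAnnihilator : Set (Module.Dual F X)) := by
      rw [SetLike.mem_coe, Submodule.mem_dualAnnihilator]
      exact fun w hw => hφK hw
    rcases Set.mem_iUnion.mp (hsub hφmem) with ⟨n, hn⟩
    rw [SetLike.mem_coe, Submodule.mem_dualAnnihilator] at hn
    have := hn (x n) (hx n).1
    rw [hφx n] at this
    exact one_ne_zero this
end
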